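/- arXiv:1409.4613 — 5 statements merged into one kernel-verified Lean document; each statement's English description precedes it below -/
import Mathlib

section
/- If two monotonic paths γ₁ and γ₂ in the rectangle D both connect a point on the bottom side B to a point on the top side T, and the bottom endpoint of γ₁ lies weakly to the left of that of γ₂ while the top endpoint of γ₁ lies weakly to the right of that of γ₂, then γ₁ and γ₂ intersect in at least one point. -/
open Set

/-- A monotonic path in a free space `S`: a connected subset of `S` such that
`(u - u')*(v - v') ≥ 0` for any two of its points. -/
def MonotonicPath (S γ : Set (ℝ × ℝ)) : Prop :=
  γ ⊆ S ∧ IsConnected γ ∧ ∀ p ∈ γ, ∀ q ∈ γ, (p.1 - q.1) * (p.2 - q.2) ≥ 0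

/-- Two points are mutually reachable if some monotonic path contains both. -/
def MutuallyReachable (S : Set (ℝ × ℝ)) (p q : ℝ × ℝ) : Prop :=
  ∃ γ : Set (ℝ × ℝ), MonotonicPath S γ ∧ p ∈ γ ∧ q ∈ γ

/-- Two monotonic paths crossing the rectangle `D` from bottom to top, whose
endpoints are oppositely ordered, intersect. -/
theorem crossing_monotonic_paths_intersect (m n : ℝ) (hm : 0 ≤ m) (hn : 0 ≤ n)
    (γ₁ γ₂ : Set (ℝ × ℝ)) (a₁ b₁ a₂ b₂ : ℝ)
    (h1 : MonotonicPath (Icc ((0 : ℝ), (0 : ℝ)) (2 * m, n)) γ₁) (h1c : IsCompact γ₁)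
    (h2 : MonotonicPath (Icc ((0 : ℝ), (0 : ℝ)) (2 * m, n)) γ₂) (h2c : IsCompact γ₂)
    (e1 : (a₁, (0 : ℝ)) ∈ γ₁) (e2 : (b₁, n) ∈ γ₁)
    (e3 : (a₂, (0 : ℝ)) ∈ γ₂) (e4 : (b₂, n) ∈ γ₂)
    (hbot : a₁ ≤ a₂) (htop : b₂ ≤ b₁) :
    (γ₁ ∩ γ₂).Nonempty := by
  obtain ⟨hs1, hc1, hmono1⟩ := h1
  obtain ⟨hs2, hc2, hmono2⟩ := h2
  -- coordinates of points of γ₁ lie in the rectangle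
  have hcoord : ∀ p ∈ γ₁, p.1 ∈ Icc (0:ℝ) (2*m) ∧ p.2 ∈ Icc (0:ℝ) n := by
    intro p hp
    have h := hs1 hp
    rw [mem_Icc] at h
    exact ⟨⟨h.1.1, h.2.1⟩, ⟨h.1.2, h.2.2⟩⟩
  -- every height t ∈ [0,n] is realized by some point of γ₂
  have hproj : ∀ t ∈ Icc (0:ℝ) n, ∃ q ∈ γ₂, q.2 = t := by
    intro t ht
    have hconn : IsPreconnected (Prod.snd '' γ₂) :=
      (hc2.image Prod.snd continuous_snd.continuousOn).isPreconnected
    have h0 : (0:ℝ) ∈ Prod.snd '' γ₂ := ⟨(a₂, 0), e3, rfl⟩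
    have hn' : n ∈ Prod.snd '' γ₂ := ⟨(b₂, n), e4, rfl⟩
    obtain ⟨q, hq, hq2⟩ := hconn.Icc_subset h0 hn' ht
    exact ⟨q, hq, hq2⟩
  -- horizontal slices of γ₂ are intervals
  have hslice : ∀ (x t : ℝ), ∀ q ∈ γ₂, ∀ q' ∈ γ₂, q.2 = t → q'.2 = t →
      q'.1 ≤ x → x ≤ q.1 → (x, t) ∈ γ₂ := by
    intro x t q hq q' hq' hqt hq't hle1 hle2
    rcases eq_or_lt_of_le hle1 with h | h
    · have : q' = (x, t) := by ext <;> simp [← h, hq't]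
      rwa [← this]
    rcases eq_or_lt_of_le hle2 with h2 | h2
    · have : q = (x, t) := by ext <;> simp [h2, hqt]
      rwa [← this]
    -- strictly between: get a point of γ₂ with first coordinate x
    have hconn : IsPreconnected (Prod.fst '' γ₂) :=
      (hc2.image Prod.fst continuous_fst.continuousOn).isPreconnected
    have hq1 : q'.1 ∈ Prod.fst '' γ₂ := ⟨q', hq', rfl⟩
    have hq1' : q.1 ∈ Prod.fst '' γ₂ := ⟨q, hq, rfl⟩
    obtain ⟨r, hr, hrx⟩ := hconn.Icc_subset hq1 hq1' ⟨hle1, hle2⟩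
    have m1 := hmono2 r hr q' hq'
    have m2 := hmono2 r hr q hq
    have hr2 : r.2 = t := by nlinarith [m1, m2]
    have : r = (x, t) := by ext <;> simp [hrx, hr2]
    rwa [← this]
  -- the two closed sets
  let f : (ℝ × ℝ) × ℝ → ℝ × ℝ := fun z => (z.2, z.1.2)
  have hf : Continuous f := by fun_prop
  let KA : Set ((ℝ × ℝ) × ℝ) := (γ₂ ×ˢ Icc (0:ℝ) (2*m)) ∩ {z | z.2 ≤ z.1.1}
  let KB : Set ((ℝ × ℝ) × ℝ) := (γ₂ ×ˢ Icc (0:ℝ) (2*m)) ∩ {z | z.1.1 ≤ z.2}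
  have hKA : IsCompact KA :=
    (h2c.prod isCompact_Icc).inter_right (isClosed_le continuous_snd continuous_fst.fst)
  have hKB : IsCompact KB :=
    (h2c.prod isCompact_Icc).inter_right (isClosed_le continuous_fst.fst continuous_snd)
  have hA : IsClosed (f '' KA) := (hKA.image hf).isClosed
  have hB : IsClosed (f '' KB) := (hKB.image hf).isClosed
  -- γ₁ is covered
  have hcov : γ₁ ⊆ f '' KA ∪ f '' KB := by
    intro p hp
    obtain ⟨hx, hy⟩ := hcoord p hp
    obtain ⟨q, hq, hqt⟩ := hproj p.2 hy
    rcases le_total p.1 q.1 with h | h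
    · exact Or.inl ⟨(q, p.1), ⟨⟨hq, hx⟩, h⟩, by simp [f, hqt]⟩
    · exact Or.inr ⟨(q, p.1), ⟨⟨hq, hx⟩, h⟩, by simp [f, hqt]⟩
  -- endpoints lie in each set
  have hAne : (γ₁ ∩ f '' KA).Nonempty := by
    refine ⟨(a₁, 0), e1, ((a₂, 0), a₁), ⟨⟨e3, ?_⟩, hbot⟩, rfl⟩
    exact (hcoord _ e1).1
  have hBne : (γ₁ ∩ f '' KB).Nonempty := by
    refine ⟨(b₁, n), e2, ((b₂, n), b₁), ⟨⟨e4, ?_⟩, htop⟩, rfl⟩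
    exact (hcoord _ e2).1
  obtain ⟨p, hp1, hpA, hpB⟩ :=
    (isPreconnected_closed_iff.mp hc1.isPreconnected _ _ hA hB hcov hAne hBne)
  obtain ⟨⟨q, x⟩, ⟨⟨hq, -⟩, hxq⟩, hfq⟩ := hpA
  obtain ⟨⟨q', x'⟩, ⟨⟨hq', -⟩, hxq'⟩, hfq'⟩ := hpB
  obtain ⟨hx, hq2⟩ : x = p.1 ∧ q.2 = p.2 := by simpa [f, Prod.ext_iff] using hfq
  obtain ⟨hx', hq2'⟩ : x' = p.1 ∧ q'.2 = p.2 := by simpa [f, Prod.ext_iff] using hfq'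
  have hmem : (p.1, p.2) ∈ γ₂ :=
    hslice p.1 p.2 q hq q' hq' hq2 hq2' (hx' ▸ hxq') (hx ▸ hxq)
  exact ⟨p, hp1, by simpa using hmem⟩
end

section
/- (Mutual reachability criterion between top and bottom.) A point (u_top, n) on the top side T and a point (u_bot, 0) on the bottom side B are mutually reachable if and only if: (u_top, n) is reachable from the bottom, (u_bot, 0) is reachable from the top, u_top ≤ r↑(u_bot, 0), and u_bot ≤ r↓(u_top, n). -/
open Set

/-- On a monotone set, if the coordinate sum of `x` is at most that of `y`,
then `x` is componentwise below `y`. -/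
lemma mono_cmp {γ : Set (ℝ × ℝ)}
    (hm : ∀ p ∈ γ, ∀ q ∈ γ, (p.1 - q.1) * (p.2 - q.2) ≥ 0)
    {x y : ℝ × ℝ} (hx : x ∈ γ) (hy : y ∈ γ) (h : x.1 + x.2 ≤ y.1 + y.2) :
    x.1 ≤ y.1 ∧ x.2 ≤ y.2 := by
  have hp := hm x hx y hy
  constructor
  · by_contra hc
    push_neg at hc
    nlinarith
  · by_contra hc
    push_neg at hc
    nlinarith

lemma mono_dichotomy {γ : Set (ℝ × ℝ)}
    (hm : ∀ p ∈ γ, ∀ q ∈ γ, (p.1 - q.1) * (p.2 - q.2) ≥ 0)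
    {x z : ℝ × ℝ} (hx : x ∈ γ) (hz : z ∈ γ) :
    (z.1 ≤ x.1 ∧ z.2 ≤ x.2) ∨ (x.1 ≤ z.1 ∧ x.2 ≤ z.2) := by
  rcases le_total (x.1 + x.2) (z.1 + z.2) with h | h
  · exact Or.inr (mono_cmp hm hx hz h)
  · exact Or.inl (mono_cmp hm hz hx h)

/-- The part of a monotone connected set lying (weakly) above one of its points
is connected. -/
lemma upper_connected {γ : Set (ℝ × ℝ)} (hc : IsPreconnected γ)
    (hm : ∀ p ∈ γ, ∀ q ∈ γ, (p.1 - q.1) * (p.2 - q.2) ≥ 0)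
    {z : ℝ × ℝ} (hz : z ∈ γ) :
    IsConnected {x ∈ γ | z.1 ≤ x.1 ∧ z.2 ≤ x.2} := by
  set P := {x ∈ γ | z.1 ≤ x.1 ∧ z.2 ≤ x.2} with hPdef
  have hzP : z ∈ P := ⟨hz, le_refl _, le_refl _⟩
  refine ⟨⟨z, hzP⟩, ?_⟩
  have key : ∀ u v : Set (ℝ × ℝ), IsOpen u → IsOpen v → P ⊆ u ∪ v →
      z ∈ u → (P ∩ v).Nonempty → P ∩ (u ∩ v) = ∅ → False := by
    intro u v hu hv hcov hzu ⟨xv, hxvP, hxvv⟩ hempty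
    have hnot : ∀ x, x ∈ P → x ∈ u → x ∈ v → False := by
      intro x h1 h2 h3
      have : x ∈ P ∩ (u ∩ v) := ⟨h1, h2, h3⟩
      rw [hempty] at this
      exact this
    have hzv : z ∉ v := fun h => hnot z hzP hzu h
    set Lz : Set (ℝ × ℝ) := {x | x.1 < z.1} ∪ {x | x.2 < z.2} with hLzdef
    set Uz : Set (ℝ × ℝ) := {x | z.1 < x.1} ∪ {x | z.2 < x.2} with hUzdef
    have hLz : IsOpen Lz :=
      (isOpen_lt continuous_fst continuous_const).union
        (isOpen_lt continuous_snd continuous_const)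
    have hUz : IsOpen Uz :=
      (isOpen_lt continuous_const continuous_fst).union
        (isOpen_lt continuous_const continuous_snd)
    have mem_Uz : ∀ x : ℝ × ℝ, z.1 ≤ x.1 → z.2 ≤ x.2 → x ≠ z → x ∈ Uz := by
      intro x h1 h2 hne
      rcases eq_or_lt_of_le h1 with he | hl
      · rcases eq_or_lt_of_le h2 with he2 | hl2
        · exact absurd (Prod.ext he.symm he2.symm) hne
        · exact Or.inr hl2
      · exact Or.inl hl
    have mem_Lz : ∀ x : ℝ × ℝ, x.1 ≤ z.1 → x.2 ≤ z.2 → x ≠ z → x ∈ Lz := by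
      intro x h1 h2 hne
      rcases eq_or_lt_of_le h1 with he | hl
      · rcases eq_or_lt_of_le h2 with he2 | hl2
        · exact absurd (Prod.ext he he2) hne
        · exact Or.inr hl2
      · exact Or.inl hl
    have hcov' : γ ⊆ (u ∪ Lz) ∪ (v ∩ Uz) := by
      intro x hx
      rcases mono_dichotomy hm hx hz with ⟨h1, h2⟩ | ⟨h1, h2⟩
      · have hxP : x ∈ P := ⟨hx, h1, h2⟩
        rcases hcov hxP with hxu | hxv
        · exact Or.inl (Or.inl hxu)
        · have hne : x ≠ z := fun h => hzv (h ▸ hxv)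
          exact Or.inr ⟨hxv, mem_Uz x h1 h2 hne⟩
      · by_cases hxz : x = z
        · subst hxz; exact Or.inl (Or.inl hzu)
        · exact Or.inl (Or.inr (mem_Lz x h1 h2 hxz))
    have hne1 : (γ ∩ (u ∪ Lz)).Nonempty := ⟨z, hz, Or.inl hzu⟩
    have hne2 : (γ ∩ (v ∩ Uz)).Nonempty := by
      refine ⟨xv, hxvP.1, hxvv, ?_⟩
      exact mem_Uz xv hxvP.2.1 hxvP.2.2 (fun h => hzv (h ▸ hxvv))
    obtain ⟨y, hyγ, hyU, hyv, hyUz⟩ :=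
      hc (u ∪ Lz) (v ∩ Uz) (hu.union hLz) (hv.inter hUz) hcov' hne1 hne2
    have hyP : y ∈ P := by
      rcases mono_dichotomy hm hyγ hz with ⟨h1, h2⟩ | ⟨h1, h2⟩
      · exact ⟨hyγ, h1, h2⟩
      · rcases hyUz with hl | hl
        · exact absurd (lt_of_lt_of_le hl h1) (lt_irrefl _)
        · exact absurd (lt_of_lt_of_le hl h2) (lt_irrefl _)
    have hyu : y ∈ u := by
      rcases hyU with h | h
      · exact h
      · rcases h with hl | hl
        · exact absurd (lt_of_lt_of_le hl hyP.2.1) (lt_irrefl _)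
        · exact absurd (lt_of_lt_of_le hl hyP.2.2) (lt_irrefl _)
    exact hnot y hyP hyu hyv
  intro u v hu hv hcov hne1 hne2
  by_contra hne
  rw [Set.not_nonempty_iff_eq_empty] at hne
  obtain ⟨xu, hxu⟩ := hne1
  obtain ⟨xv, hxv⟩ := hne2
  rcases hcov hzP with hzu | hzv
  · exact key u v hu hv hcov hzu ⟨xv, hxv.1, hxv.2⟩ hne
  · refine key v u hv hu (by rwa [Set.union_comm]) hzv ⟨xu, hxu.1, hxu.2⟩ ?_
    rw [Set.inter_comm v u]; exact hne

/-- The part of a monotone connected set lying (weakly) below one of its points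
is connected. -/
lemma lower_connected {γ : Set (ℝ × ℝ)} (hc : IsPreconnected γ)
    (hm : ∀ p ∈ γ, ∀ q ∈ γ, (p.1 - q.1) * (p.2 - q.2) ≥ 0)
    {z : ℝ × ℝ} (hz : z ∈ γ) :
    IsConnected {x ∈ γ | x.1 ≤ z.1 ∧ x.2 ≤ z.2} := by
  have hc' : IsPreconnected ((fun x : ℝ × ℝ => (-x.1, -x.2)) '' γ) :=
    hc.image _ (by fun_prop)
  have hm' : ∀ p ∈ (fun x : ℝ × ℝ => (-x.1, -x.2)) '' γ,
      ∀ q ∈ (fun x : ℝ × ℝ => (-x.1, -x.2)) '' γ, (p.1 - q.1) * (p.2 - q.2) ≥ 0 := by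
    rintro p ⟨a, ha, rfl⟩ q ⟨b, hb, rfl⟩
    have := hm a ha b hb
    simp only
    nlinarith
  have hz' : ((-z.1, -z.2) : ℝ × ℝ) ∈ (fun x : ℝ × ℝ => (-x.1, -x.2)) '' γ :=
    ⟨z, hz, rfl⟩
  have h := upper_connected hc' hm' hz'
  have himg : IsConnected ((fun x : ℝ × ℝ => (-x.1, -x.2)) ''
      {x ∈ (fun x : ℝ × ℝ => (-x.1, -x.2)) '' γ | -z.1 ≤ x.1 ∧ -z.2 ≤ x.2}) :=
    h.image _ (by fun_prop)
  convert himg using 1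
  ext x
  constructor
  · rintro ⟨hxγ, h1, h2⟩
    exact ⟨(-x.1, -x.2), ⟨⟨x, hxγ, rfl⟩, by simpa using h1, by simpa using h2⟩,
      by simp⟩
  · rintro ⟨y, ⟨⟨a, haγ, rfl⟩, h1, h2⟩, rfl⟩
    simp only [neg_neg, Prod.mk.eta] at h1 h2 ⊢
    exact ⟨haγ, by linarith, by linarith⟩

/-- Mutual reachability criterion between a top point and a bottom point, in
terms of the rightmost reachability functions `r↑` and `r↓`. -/
theorem top_bottom_mutually_reachable_iff (m n : ℝ) (hm : 0 ≤ m) (hn : 0 ≤ n)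
    (Dε : Set (ℝ × ℝ)) (hD : Dε ⊆ Icc ((0 : ℝ), (0 : ℝ)) (2 * m, n))
    (rUp rDown : ℝ × ℝ → ℝ)
    (hrUp : ∀ p : ℝ × ℝ, (∃ u : ℝ, MutuallyReachable Dε p (u, n)) →
      MutuallyReachable Dε p (rUp p, n) ∧
        ∀ u : ℝ, MutuallyReachable Dε p (u, n) → u ≤ rUp p)
    (hrDown : ∀ p : ℝ × ℝ, (∃ u : ℝ, MutuallyReachable Dε p (u, 0)) →
      MutuallyReachable Dε p (rDown p, 0) ∧
        ∀ u : ℝ, MutuallyReachable Dε p (u, 0) → u ≤ rDown p)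
    (utop ubot : ℝ) :
    MutuallyReachable Dε (utop, n) (ubot, 0) ↔
      ((∃ u : ℝ, MutuallyReachable Dε (utop, n) (u, 0)) ∧
       (∃ u : ℝ, MutuallyReachable Dε (ubot, 0) (u, n)) ∧
       utop ≤ rUp (ubot, 0) ∧ ubot ≤ rDown (utop, n)) := by
  classical
  constructor
  · rintro ⟨γ, hpath, hp1, hp2⟩
    have h1 : MutuallyReachable Dε (utop, n) (ubot, 0) := ⟨γ, hpath, hp1, hp2⟩
    have h2 : MutuallyReachable Dε (ubot, 0) (utop, n) := ⟨γ, hpath, hp2, hp1⟩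
    exact ⟨⟨ubot, h1⟩, ⟨utop, h2⟩,
      (hrUp (ubot, 0) ⟨utop, h2⟩).2 utop h2,
      (hrDown (utop, n) ⟨ubot, h1⟩).2 ubot h1⟩
  · rintro ⟨hex1, hex2, hle1, hle2⟩
    obtain ⟨γ1, ⟨hs1, hc1, hm1⟩, hp1γ, hq1γ⟩ := (hrDown (utop, n) hex1).1
    obtain ⟨γ2, ⟨hs2, hc2, hm2⟩, hp2γ, hq2γ⟩ := (hrUp (ubot, 0) hex2).1
    set b1 : ℝ := rDown (utop, n) with hb1def
    set t2 : ℝ := rUp (ubot, 0) with ht2def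
    have hcontf : Continuous (fun x : ℝ × ℝ => x.1 + x.2) := by fun_prop
    rcases eq_or_lt_of_le hn with hn0 | hn0
    · -- degenerate case n = 0
      have hsnd : ∀ x ∈ Dε, x.2 = 0 := by
        intro x hx
        have h1 := (hD hx).1.2
        have h2 := (hD hx).2.2
        simp only at h1 h2
        linarith [hn0]
      rcases le_total utop ubot with hcase | hcase
      · -- use γ1 : contains (utop, n) and (b1, 0); find (ubot, 0) on it
        have hiv := hc1.isPreconnected.intermediate_value hp1γ hq1γ
          hcontf.continuousOn
        have hmem : ubot ∈ Icc ((utop, n).1 + (utop, n).2) ((b1, 0).1 + (b1, 0).2) := by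
          simp only
          constructor <;> [linarith; linarith]
        obtain ⟨x, hxγ, hxf⟩ := hiv hmem
        have hx2 : x.2 = 0 := hsnd x (hs1 hxγ)
        have hxeq : x = (ubot, 0) := by
          apply Prod.ext
          · simp only at hxf ⊢; linarith
          · exact hx2
        exact ⟨γ1, ⟨hs1, hc1, hm1⟩, hp1γ, hxeq ▸ hxγ⟩
      · -- use γ2 : contains (ubot, 0) and (t2, n); find (utop, n) on it
        have hiv := hc2.isPreconnected.intermediate_value hp2γ hq2γ
          hcontf.continuousOn
        have hmem : utop ∈ Icc ((ubot, 0).1 + (ubot, 0).2) ((t2, n).1 + (t2, n).2) := by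
          simp only
          constructor <;> [linarith; linarith]
        obtain ⟨x, hxγ, hxf⟩ := hiv hmem
        have hx2 : x.2 = 0 := hsnd x (hs2 hxγ)
        have hxeq : x = (utop, n) := by
          apply Prod.ext
          · simp only at hxf ⊢; linarith
          · rw [hx2, ← hn0]
        exact ⟨γ2, ⟨hs2, hc2, hm2⟩, hxeq ▸ hxγ, hp2γ⟩
    · -- main case 0 < n
      -- bounds on second coordinates
      have hsnd : ∀ x ∈ Dε, 0 ≤ x.2 ∧ x.2 ≤ n := by
        intro x hx
        exact ⟨(hD hx).1.2, (hD hx).2.2⟩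
      -- b1 ≤ utop
      have hb1le : b1 ≤ utop := by
        have := hm1 (utop, n) hp1γ (b1, 0) hq1γ
        simp only at this
        nlinarith
      have hbA : b1 ≤ utop + n := by linarith
      -- the IVT levels
      have hiv1 : ∀ s ∈ Icc b1 (utop + n), ∃ x, x ∈ γ1 ∧ x.1 + x.2 = s := by
        intro s hs
        have hiv := hc1.isPreconnected.intermediate_value hq1γ hp1γ
          hcontf.continuousOn
        have hmem : s ∈ Icc ((b1, 0).1 + (b1, 0).2) ((utop, n).1 + (utop, n).2) := by
          simp only
          constructor
          · linarith [hs.1]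
          · linarith [hs.2]
        obtain ⟨x, hxγ, hxf⟩ := hiv hmem
        exact ⟨x, hxγ, hxf⟩
      have hiv2 : ∀ s ∈ Icc b1 (utop + n), ∃ x, x ∈ γ2 ∧ x.1 + x.2 = s := by
        intro s hs
        have hiv := hc2.isPreconnected.intermediate_value hp2γ hq2γ
          hcontf.continuousOn
        have hmem : s ∈ Icc ((ubot, 0).1 + (ubot, 0).2) ((t2, n).1 + (t2, n).2) := by
          simp only
          constructor
          · linarith [hs.1]
          · linarith [hs.2]
        obtain ⟨x, hxγ, hxf⟩ := hiv hmem
        exact ⟨x, hxγ, hxf⟩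
      choose pt1 hpt1γ hpt1s using hiv1
      choose pt2 hpt2γ hpt2s using hiv2
      set F1 : ℝ → ℝ := fun s =>
        if h : s ∈ Icc b1 (utop + n) then (pt1 s h).1 else 0 with hF1def
      set F2 : ℝ → ℝ := fun s =>
        if h : s ∈ Icc b1 (utop + n) then (pt2 s h).1 else 0 with hF2def
      have hF1val : ∀ s (h : s ∈ Icc b1 (utop + n)), F1 s = (pt1 s h).1 := by
        intro s h; rw [hF1def]; simp only; rw [dif_pos h]
      have hF2val : ∀ s (h : s ∈ Icc b1 (utop + n)), F2 s = (pt2 s h).1 := by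
        intro s h; rw [hF2def]; simp only; rw [dif_pos h]
      -- monotonicity/Lipschitz of F1
      have hF1mono : ∀ s ∈ Icc b1 (utop + n), ∀ t ∈ Icc b1 (utop + n),
          s ≤ t → F1 s ≤ F1 t ∧ F1 t - F1 s ≤ t - s := by
        intro s hs t ht hst
        have h1 := mono_cmp hm1 (hpt1γ s hs) (hpt1γ t ht)
          (by rw [hpt1s s hs, hpt1s t ht]; exact hst)
        have e1 := hpt1s s hs
        have e2 := hpt1s t ht
        rw [hF1val s hs, hF1val t ht]
        exact ⟨h1.1, by linarith [h1.2]⟩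
      have hF2mono : ∀ s ∈ Icc b1 (utop + n), ∀ t ∈ Icc b1 (utop + n),
          s ≤ t → F2 s ≤ F2 t ∧ F2 t - F2 s ≤ t - s := by
        intro s hs t ht hst
        have h1 := mono_cmp hm2 (hpt2γ s hs) (hpt2γ t ht)
          (by rw [hpt2s s hs, hpt2s t ht]; exact hst)
        have e1 := hpt2s s hs
        have e2 := hpt2s t ht
        rw [hF2val s hs, hF2val t ht]
        exact ⟨h1.1, by linarith [h1.2]⟩
      have hlip : ∀ F : ℝ → ℝ, (∀ s ∈ Icc b1 (utop + n), ∀ t ∈ Icc b1 (utop + n),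
          s ≤ t → F s ≤ F t ∧ F t - F s ≤ t - s) →
          ContinuousOn F (Icc b1 (utop + n)) := by
        intro F hF
        apply LipschitzOnWith.continuousOn (K := 1)
        rw [lipschitzOnWith_iff_dist_le_mul]
        intro s hs t ht
        rw [Real.dist_eq, Real.dist_eq, NNReal.coe_one, one_mul]
        rcases le_total s t with h | h
        · obtain ⟨ha, hb⟩ := hF s hs t ht h
          have habs : |s - t| = t - s := by
            rw [abs_sub_comm, abs_of_nonneg (by linarith)]
          rw [habs]
          apply abs_le.2
          constructor <;> linarith
        · obtain ⟨ha, hb⟩ := hF t ht s hs h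
          have habs : |s - t| = s - t := abs_of_nonneg (by linarith)
          rw [habs]
          apply abs_le.2
          constructor <;> linarith
      have hD1cont : ContinuousOn (fun s => F1 s - F2 s) (Icc b1 (utop + n)) :=
        (hlip F1 hF1mono).sub (hlip F2 hF2mono)
      -- endpoint signs
      have hbmem : b1 ∈ Icc b1 (utop + n) := ⟨le_refl _, hbA⟩
      have hAmem : (utop + n) ∈ Icc b1 (utop + n) := ⟨hbA, le_refl _⟩
      have hDb : 0 ≤ F1 b1 - F2 b1 := by
        -- F1 b1 = b1 (second coord of pt1 b1 is ≤ 0 by comparing with (b1,0), ≥ 0 by hD)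
        have hcmp := mono_cmp hm1 (hpt1γ b1 hbmem) hq1γ
          (by rw [hpt1s b1 hbmem]; simp)
        have hge : 0 ≤ (pt1 b1 hbmem).2 := (hsnd _ (hs1 (hpt1γ b1 hbmem))).1
        have e1 := hpt1s b1 hbmem
        have hge2 : 0 ≤ (pt2 b1 hbmem).2 := (hsnd _ (hs2 (hpt2γ b1 hbmem))).1
        have e2 := hpt2s b1 hbmem
        rw [hF1val b1 hbmem, hF2val b1 hbmem]
        simp only at hcmp
        linarith [hcmp.2]
      have hDA : F1 (utop + n) - F2 (utop + n) ≤ 0 := by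
        have hcmp := mono_cmp hm1 hp1γ (hpt1γ _ hAmem)
          (by rw [hpt1s _ hAmem])
        have hle : (pt2 _ hAmem).2 ≤ n := (hsnd _ (hs2 (hpt2γ _ hAmem))).2
        have e1 := hpt1s _ hAmem
        have e2 := hpt2s _ hAmem
        rw [hF1val _ hAmem, hF2val _ hAmem]
        simp only at hcmp
        linarith [hcmp.2]
      -- intermediate value for the difference
      have hiv := intermediate_value_Icc' hbA hD1cont
      have h0mem : (0 : ℝ) ∈ Icc (F1 (utop + n) - F2 (utop + n)) (F1 b1 - F2 b1) :=
        ⟨hDA, hDb⟩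
      obtain ⟨s, hsIcc, hDs⟩ := hiv h0mem
      -- the crossing point
      set z : ℝ × ℝ := pt1 s hsIcc with hzdef
      have hz1 : z ∈ γ1 := hpt1γ s hsIcc
      have hzs : z.1 + z.2 = s := hpt1s s hsIcc
      have hz2 : z ∈ γ2 := by
        have h1 : F1 s = z.1 := hF1val s hsIcc
        have h2 : F2 s = (pt2 s hsIcc).1 := hF2val s hsIcc
        have hfst : z.1 = (pt2 s hsIcc).1 := by
          have : F1 s - F2 s = 0 := hDs
          rw [h1, h2] at this
          linarith
        have hsum : (pt2 s hsIcc).1 + (pt2 s hsIcc).2 = s := hpt2s s hsIcc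
        have : z = pt2 s hsIcc := Prod.ext hfst (by linarith)
        rw [this]
        exact hpt2γ s hsIcc
      -- z lies between the two endpoints componentwise
      have hzlep1 : z.1 ≤ utop ∧ z.2 ≤ n := by
        have := mono_cmp hm1 hz1 hp1γ (by rw [hzs]; simpa using hsIcc.2)
        simpa using this
      have hp2lez : ubot ≤ z.1 ∧ 0 ≤ z.2 := by
        have := mono_cmp hm2 hp2γ hz2 (by rw [hzs]; simp only; linarith [hsIcc.1])
        simpa using this
      -- glue the two half-paths
      set δ : Set (ℝ × ℝ) :=
        {x ∈ γ1 | z.1 ≤ x.1 ∧ z.2 ≤ x.2} ∪ {x ∈ γ2 | x.1 ≤ z.1 ∧ x.2 ≤ z.2} with hδdef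
      have hδconn : IsConnected δ := by
        apply IsConnected.union
        · exact ⟨z, ⟨hz1, le_refl _, le_refl _⟩, ⟨hz2, le_refl _, le_refl _⟩⟩
        · exact upper_connected hc1.isPreconnected hm1 hz1
        · exact lower_connected hc2.isPreconnected hm2 hz2
      have hδsub : δ ⊆ Dε := by
        rintro x (⟨hx, -⟩ | ⟨hx, -⟩)
        · exact hs1 hx
        · exact hs2 hx
      have hδmono : ∀ p ∈ δ, ∀ q ∈ δ, (p.1 - q.1) * (p.2 - q.2) ≥ 0 := by
        rintro p (⟨hp, hp1', hp2'⟩ | ⟨hp, hp1', hp2'⟩) q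
          (⟨hq, hq1', hq2'⟩ | ⟨hq, hq1', hq2'⟩)
        · exact hm1 p hp q hq
        · exact mul_nonneg (by linarith) (by linarith)
        · have : (q.1 - p.1) * (q.2 - p.2) ≥ 0 :=
            mul_nonneg (by linarith) (by linarith)
          nlinarith
        · exact hm2 p hp q hq
      have hp1δ : (utop, n) ∈ δ := Or.inl ⟨hp1γ, hzlep1.1, hzlep1.2⟩
      have hp2δ : (ubot, 0) ∈ δ := Or.inr ⟨hp2γ, hp2lez.1, hp2lez.2⟩
      exact ⟨δ, ⟨hδsub, hδconn, hδmono⟩, hp1δ, hp2δ⟩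
end

section
/- (Monotonicity of r↓.) If (u₁,v₁) and (u₂,v₂) are both reachable from the bottom, u₁ ≤ u₂, and v₁ ≥ v₂, then r↓(u₁,v₁) ≤ r↓(u₂,v₂). -/
open Set

/-- Piece of a connected set cut by a closed splitting through a single point is preconnected. -/
lemma piece_preconn {α : Type*} [TopologicalSpace α] {X A B : Set α}
    (hX : IsPreconnected X) (hA : IsClosed A) (hB : IsClosed B)
    (hcov : X ⊆ A ∪ B) {q : α} (hqX : q ∈ X) (hqA : q ∈ A) (hqB : q ∈ B)
    (hAB : X ∩ A ∩ B ⊆ {q}) : IsPreconnected (X ∩ A) := by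
  rw [isPreconnected_closed_iff]
  intro t t' ht ht' hcover hne hne'
  by_contra hempty
  rw [Set.not_nonempty_iff_eq_empty] at hempty
  -- helper: the asymmetric argument
  have key : ∀ s s' : Set α, IsClosed s → IsClosed s' → X ∩ A ⊆ s ∪ s' →
      (X ∩ A ∩ s).Nonempty → (X ∩ A ∩ s').Nonempty → X ∩ A ∩ (s ∩ s') = ∅ →
      q ∈ s → False := by
    intro s s' hs hs' hcv hn hn' hemp hqs
    obtain ⟨a', ha'⟩ := hn'
    have ha't : a' ∉ s := by
      intro h
      have : a' ∈ X ∩ A ∩ (s ∩ s') := ⟨ha'.1, h, ha'.2⟩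
      rw [hemp] at this; exact this
    have := isPreconnected_closed_iff.mp hX (s' ∩ A) (s ∪ B)
      (hs'.inter hA) (hs.union hB)
      (by intro x hx
          by_cases hxA : x ∈ A
          · rcases hcv ⟨hx, hxA⟩ with h | h
            · exact Or.inr (Or.inl h)
            · exact Or.inl ⟨h, hxA⟩
          · rcases hcov hx with h | h
            · exact absurd h hxA
            · exact Or.inr (Or.inr h))
      ⟨a', ha'.1.1, ha'.2, ha'.1.2⟩
      ⟨q, hqX, Or.inl hqs⟩
    obtain ⟨c, hcX, ⟨hcs', hcA⟩, hc2⟩ := this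
    rcases hc2 with hcs | hcB
    · have : c ∈ X ∩ A ∩ (s ∩ s') := ⟨⟨hcX, hcA⟩, hcs, hcs'⟩
      rw [hemp] at this; exact this
    · have hcq : c = q := hAB ⟨⟨hcX, hcA⟩, hcB⟩
      subst hcq
      have : c ∈ X ∩ A ∩ (s ∩ s') := ⟨⟨hcX, hcA⟩, hqs, hcs'⟩
      rw [hemp] at this; exact this
  have hqcov : q ∈ t ∪ t' := hcover ⟨hqX, hqA⟩
  rcases hqcov with h | h
  · exact key t t' ht ht' hcover hne hne' hempty h
  · exact key t' t ht' ht (by rwa [union_comm]) hne' hne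
      (by rwa [inter_comm t t'] at hempty) h


/-- Any two points of a monotone set are comparable. -/
lemma mono_comparable {γ : Set (ℝ × ℝ)}
    (hm : ∀ p ∈ γ, ∀ q ∈ γ, (p.1 - q.1) * (p.2 - q.2) ≥ 0)
    {p q : ℝ × ℝ} (hp : p ∈ γ) (hq : q ∈ γ) : p ≤ q ∨ q ≤ p := by
  have h := hm p hp q hq
  rcases le_total p.1 q.1 with h1 | h1 <;> rcases le_total p.2 q.2 with h2 | h2
  · exact Or.inl ⟨h1, h2⟩
  · rcases eq_or_lt_of_le h1 with he | hl
    · exact Or.inr ⟨he.ge, h2⟩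
    · have : p.2 = q.2 := by nlinarith
      exact Or.inl ⟨h1, this.le⟩
  · rcases eq_or_lt_of_le h1 with he | hl
    · exact Or.inl ⟨he.ge, h2⟩
    · have : p.2 = q.2 := by nlinarith
      exact Or.inr ⟨h1, this.ge⟩
  · exact Or.inr ⟨h1, h2⟩

/-- Splitting a monotonic path at a point keeps the lower part a monotonic path. -/
lemma split_Iic {S γ : Set (ℝ × ℝ)} (h : MonotonicPath S γ) {q : ℝ × ℝ} (hq : q ∈ γ) :
    MonotonicPath S (γ ∩ Iic q) := by
  obtain ⟨hS, ⟨hne, hconn⟩, hm⟩ := h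
  refine ⟨(inter_subset_left).trans hS, ⟨⟨q, hq, mem_Iic.mpr le_rfl⟩, ?_⟩,
    fun p hp r hr => hm p hp.1 r hr.1⟩
  refine piece_preconn hconn isClosed_Iic isClosed_Ici ?_ hq (mem_Iic.mpr le_rfl) (mem_Ici.mpr le_rfl) ?_
  · intro p hp
    rcases mono_comparable hm hp hq with h | h
    · exact Or.inl h
    · exact Or.inr h
  · rintro p ⟨⟨-, h1⟩, h2⟩
    exact mem_singleton_iff.mpr (le_antisymm h1 h2)

lemma split_Ici {S γ : Set (ℝ × ℝ)} (h : MonotonicPath S γ) {q : ℝ × ℝ} (hq : q ∈ γ) :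
    MonotonicPath S (γ ∩ Ici q) := by
  obtain ⟨hS, ⟨hne, hconn⟩, hm⟩ := h
  refine ⟨(inter_subset_left).trans hS, ⟨⟨q, hq, mem_Ici.mpr le_rfl⟩, ?_⟩,
    fun p hp r hr => hm p hp.1 r hr.1⟩
  refine piece_preconn hconn isClosed_Ici isClosed_Iic ?_ hq (mem_Ici.mpr le_rfl) (mem_Iic.mpr le_rfl) ?_
  · intro p hp
    rcases mono_comparable hm hp hq with h | h
    · exact Or.inr h
    · exact Or.inl h
  · rintro p ⟨⟨-, h1⟩, h2⟩
    exact mem_singleton_iff.mpr (le_antisymm h2 h1)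

/-- Truncating a monotonic path between two of its comparable points. -/
lemma trunc {S γ : Set (ℝ × ℝ)} (h : MonotonicPath S γ) {a b : ℝ × ℝ}
    (ha : a ∈ γ) (hb : b ∈ γ) (hab : a ≤ b) :
    MonotonicPath S (γ ∩ Iic b ∩ Ici a) ∧ a ∈ γ ∩ Iic b ∩ Ici a ∧ b ∈ γ ∩ Iic b ∩ Ici a := by
  have h1 := split_Iic h hb
  have h2 := split_Ici h1 (q := a) ⟨ha, hab⟩
  exact ⟨h2, ⟨⟨ha, hab⟩, le_refl a⟩, ⟨⟨hb, le_refl b⟩, hab⟩⟩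

/-- Splicing two monotonic paths at a common point. -/
lemma splice {S α β : Set (ℝ × ℝ)} (hα : MonotonicPath S α) (hβ : MonotonicPath S β)
    {q : ℝ × ℝ} (hqα : q ∈ α) (hqβ : q ∈ β) (hL : α ⊆ Iic q) (hU : β ⊆ Ici q) :
    MonotonicPath S (α ∪ β) := by
  obtain ⟨hS1, hc1, hm1⟩ := hα
  obtain ⟨hS2, hc2, hm2⟩ := hβ
  refine ⟨union_subset hS1 hS2, IsConnected.union ⟨q, hqα, hqβ⟩ hc1 hc2, ?_⟩
  have cross : ∀ p ∈ α, ∀ r ∈ β, (p.1 - r.1) * (p.2 - r.2) ≥ 0 := by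
    intro p hp r hr
    have h1 := hL hp
    have h2 := hU hr
    have : p.1 - r.1 ≤ 0 := by have := h1.1; have := h2.1; simp at *; linarith
    have : p.2 - r.2 ≤ 0 := by have := h1.2; have := h2.2; simp at *; linarith
    nlinarith [h1.1, h1.2, h2.1, h2.2]
  rintro p (hp | hp) r (hr | hr)
  · exact hm1 p hp r hr
  · exact cross p hp r hr
  · nlinarith [cross r hr p hp]
  · exact hm2 p hp r hr

/-- Monotonicity of `r↓`: moving right and down can only increase the rightmost
bottom point reachable. -/
theorem rDown_monotone (m n : ℝ) (hm : 0 ≤ m) (hn : 0 ≤ n)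
    (Dε : Set (ℝ × ℝ)) (hD : Dε ⊆ Icc ((0 : ℝ), (0 : ℝ)) (2 * m, n))
    (rDown : ℝ × ℝ → ℝ)
    (hspec : ∀ p : ℝ × ℝ, (∃ u : ℝ, MutuallyReachable Dε p (u, 0)) →
      MutuallyReachable Dε p (rDown p, 0) ∧
        ∀ u : ℝ, MutuallyReachable Dε p (u, 0) → u ≤ rDown p)
    (hcross : ∀ γ₁ γ₂ : Set (ℝ × ℝ), MonotonicPath Dε γ₁ → MonotonicPath Dε γ₂ →
      ∀ p₁ ∈ γ₁, ∀ p₂ ∈ γ₂, ∀ x₁ x₂ : ℝ, (x₁, (0 : ℝ)) ∈ γ₁ → (x₂, (0 : ℝ)) ∈ γ₂ →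
        p₁.1 ≤ p₂.1 → p₂.2 ≤ p₁.2 → x₂ ≤ x₁ → (γ₁ ∩ γ₂).Nonempty)
    (u₁ v₁ u₂ v₂ : ℝ)
    (h1 : ∃ u : ℝ, MutuallyReachable Dε (u₁, v₁) (u, 0))
    (h2 : ∃ u : ℝ, MutuallyReachable Dε (u₂, v₂) (u, 0))
    (hu : u₁ ≤ u₂) (hv : v₂ ≤ v₁) :
    rDown (u₁, v₁) ≤ rDown (u₂, v₂) := by
  by_contra hlt
  push_neg at hlt
  obtain ⟨hr₁, hmax₁⟩ := hspec (u₁, v₁) h1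
  obtain ⟨hr₂, hmax₂⟩ := hspec (u₂, v₂) h2
  set x₁ := rDown (u₁, v₁) with hx₁
  set x₂ := rDown (u₂, v₂) with hx₂
  obtain ⟨γ₁, hγ₁, hp₁, hb₁⟩ := hr₁
  obtain ⟨γ₂, hγ₂, hp₂, hb₂⟩ := hr₂
  have hv₁0 : 0 ≤ v₁ := (hD (hγ₁.1 hp₁)).1.2
  have hv₂0 : 0 ≤ v₂ := (hD (hγ₂.1 hp₂)).1.2
  have final : MutuallyReachable Dε (u₂, v₂) (x₁, 0) → False := fun h =>
    absurd (hmax₂ x₁ h) (not_le.mpr hlt)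
  -- truncate γ₁ between its two marked points
  rcases mono_comparable hγ₁.2.2 hb₁ hp₁ with hc₁ | hc₁ <;>
    rcases mono_comparable hγ₂.2.2 hb₂ hp₂ with hc₂ | hc₂
  · -- A & C : (x₁,0) ≤ (u₁,v₁), (x₂,0) ≤ (u₂,v₂)
    obtain ⟨hδ₁, haδ₁, hbδ₁⟩ := trunc hγ₁ hb₁ hp₁ hc₁
    obtain ⟨hδ₂, haδ₂, hbδ₂⟩ := trunc hγ₂ hb₂ hp₂ hc₂
    obtain ⟨q, hq₁, hq₂⟩ := hcross _ _ hδ₁ hδ₂ (u₁, v₁) hbδ₁ (u₂, v₂) hbδ₂ x₁ x₂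
      haδ₁ haδ₂ hu hv hlt.le
    -- (x₁,0) ≤ q ≤ (u₂,v₂)
    have hxq : ((x₁, (0:ℝ)) : ℝ × ℝ) ≤ q := hq₁.2
    have hqp : q ≤ ((u₂, v₂) : ℝ × ℝ) := hq₂.1.2
    have hα := split_Iic hδ₁ hq₁
    have hβ := split_Ici hδ₂ hq₂
    exact final ⟨_, splice hα hβ ⟨hq₁, mem_Iic.mpr le_rfl⟩ ⟨hq₂, mem_Ici.mpr le_rfl⟩
      inter_subset_right inter_subset_right,
      Or.inr ⟨hbδ₂, hqp⟩, Or.inl ⟨haδ₁, hxq⟩⟩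
  · -- A & D : (x₁,0) ≤ (u₁,v₁), (u₂,v₂) ≤ (x₂,0)
    obtain ⟨hδ₁, haδ₁, hbδ₁⟩ := trunc hγ₁ hb₁ hp₁ hc₁
    obtain ⟨hδ₂, haδ₂, hbδ₂⟩ := trunc hγ₂ hp₂ hb₂ hc₂
    obtain ⟨q, hq₁, hq₂⟩ := hcross _ _ hδ₁ hδ₂ (u₁, v₁) hbδ₁ (u₂, v₂) haδ₂ x₁ x₂
      haδ₁ hbδ₂ hu hv hlt.le
    have h1' : x₁ ≤ q.1 := hq₁.2.1
    have h2' : q.1 ≤ x₂ := hq₂.1.2.1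
    linarith
  · -- B & C : (u₁,v₁) ≤ (x₁,0), (x₂,0) ≤ (u₂,v₂)
    have hv₁ : v₁ = 0 := le_antisymm hc₁.2 hv₁0
    obtain ⟨hδ₁, haδ₁, hbδ₁⟩ := trunc hγ₁ hp₁ hb₁ hc₁
    obtain ⟨hδ₂, haδ₂, hbδ₂⟩ := trunc hγ₂ hb₂ hp₂ hc₂
    obtain ⟨q, hq₁, hq₂⟩ := hcross _ _ hδ₁ hδ₂ (u₁, v₁) haδ₁ (u₂, v₂) hbδ₂ x₁ x₂
      hbδ₁ haδ₂ hu hv hlt.le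
    obtain ⟨qx, qy⟩ := q
    have hqy0 : qy = 0 := le_antisymm hq₁.1.2.2 (hD (hγ₂.1 hq₂.1.1)).1.2
    subst hqy0
    have hqx2 : qx ≤ x₂ := hmax₂ qx ⟨γ₂, hγ₂, hp₂, hq₂.1.1⟩
    have hx2q : x₂ ≤ qx := hq₂.2.1
    have hv₂ : v₂ = 0 := le_antisymm (hv.trans hv₁.le) hv₂0
    have hu2 : u₂ ≤ x₂ := hmax₂ u₂ ⟨γ₂, hγ₂, hp₂, by rwa [hv₂] at hp₂⟩
    have hpq : ((u₂, v₂) : ℝ × ℝ) ≤ (qx, 0) := ⟨hu2.trans hx2q, hv₂.le⟩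
    have hqx1 : ((qx, (0:ℝ)) : ℝ × ℝ) ≤ (x₁, 0) := ⟨hqx2.trans hlt.le, le_rfl⟩
    have hα := split_Iic hδ₂ hq₂
    have hβ := split_Ici hδ₁ hq₁
    exact final ⟨_, splice hα hβ ⟨hq₂, mem_Iic.mpr le_rfl⟩ ⟨hq₁, mem_Ici.mpr le_rfl⟩
      inter_subset_right inter_subset_right,
      Or.inl ⟨hbδ₂, hpq⟩, Or.inr ⟨hbδ₁, hqx1⟩⟩
  · -- B & D : (u₁,v₁) ≤ (x₁,0), (u₂,v₂) ≤ (x₂,0)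
    obtain ⟨hδ₁, haδ₁, hbδ₁⟩ := trunc hγ₁ hp₁ hb₁ hc₁
    obtain ⟨hδ₂, haδ₂, hbδ₂⟩ := trunc hγ₂ hp₂ hb₂ hc₂
    obtain ⟨q, hq₁, hq₂⟩ := hcross _ _ hδ₁ hδ₂ (u₁, v₁) haδ₁ (u₂, v₂) haδ₂ x₁ x₂
      hbδ₁ hbδ₂ hu hv hlt.le
    obtain ⟨qx, qy⟩ := q
    have hqy0 : qy = 0 := le_antisymm hq₁.1.2.2 (hD (hγ₂.1 hq₂.1.1)).1.2
    subst hqy0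
    have hpq : ((u₂, v₂) : ℝ × ℝ) ≤ (qx, 0) := hq₂.2
    have hqx1 : ((qx, (0:ℝ)) : ℝ × ℝ) ≤ (x₁, 0) := ⟨hq₂.1.2.1.trans hlt.le, le_rfl⟩
    have hα := split_Iic hδ₂ hq₂
    have hβ := split_Ici hδ₁ hq₁
    exact final ⟨_, splice hα hβ ⟨hq₂, mem_Iic.mpr le_rfl⟩ ⟨hq₁, mem_Ici.mpr le_rfl⟩
      inter_subset_right inter_subset_right,
      Or.inl ⟨haδ₂, hpq⟩, Or.inr ⟨hbδ₁, hqx1⟩⟩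
end

section
/- (Monotonicity of r↑.) If (u₁,v₁) and (u₂,v₂) are both reachable from the top, u₁ ≤ u₂, and v₁ ≥ v₂, then r↑(u₁,v₁) ≤ r↑(u₂,v₂). -/
open Set

private lemma chain_le_total {γ : Set (ℝ × ℝ)}
    (h : ∀ p ∈ γ, ∀ q ∈ γ, (p.1 - q.1) * (p.2 - q.2) ≥ 0)
    {p q : ℝ × ℝ} (hp : p ∈ γ) (hq : q ∈ γ) : p ≤ q ∨ q ≤ p := by
  have hpq := h p hp q hq
  rw [Prod.le_def, Prod.le_def]
  rcases le_total p.1 q.1 with h1 | h1 <;> rcases le_total p.2 q.2 with h2 | h2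
  · exact Or.inl ⟨h1, h2⟩
  · have h0 : (p.1 - q.1) * (p.2 - q.2) = 0 := le_antisymm (by nlinarith) hpq
    rcases mul_eq_zero.1 h0 with h3 | h3
    · exact Or.inr ⟨by linarith [sub_eq_zero.1 h3], h2⟩
    · exact Or.inl ⟨h1, by linarith [sub_eq_zero.1 h3]⟩
  · have h0 : (p.1 - q.1) * (p.2 - q.2) = 0 := le_antisymm (by nlinarith) hpq
    rcases mul_eq_zero.1 h0 with h3 | h3
    · exact Or.inl ⟨by linarith [sub_eq_zero.1 h3], h2⟩
    · exact Or.inr ⟨h1, by linarith [sub_eq_zero.1 h3]⟩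
  · exact Or.inr ⟨h1, h2⟩

private lemma sum_eq_imp {p q : ℝ × ℝ} (hle : p ≤ q)
    (hsum : p.1 + p.2 = q.1 + q.2) : p = q := by
  rw [Prod.le_def] at hle
  exact Prod.ext (by linarith [hle.1, hle.2]) (by linarith [hle.1, hle.2])

private lemma preconn_trunc (γ : Set (ℝ × ℝ)) (hγ : IsPreconnected γ)
    (f : ℝ × ℝ → ℝ) (hf : Continuous f)
    (hinj : ∀ p ∈ γ, ∀ q ∈ γ, f p = f q → p = q)
    (a : ℝ × ℝ) (ha : a ∈ γ) :
    IsPreconnected (γ ∩ {p | f a ≤ f p}) := by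
  set B := γ ∩ {p | f a ≤ f p} with hB
  have haB : a ∈ B := ⟨ha, show f a ≤ f a from le_rfl⟩
  have key : ∀ U V : Set (ℝ × ℝ), IsOpen U → IsOpen V → B ⊆ U ∪ V →
      (B ∩ V).Nonempty → B ∩ (U ∩ V) = ∅ → a ∈ U → False := by
    intro U V hU hV hcov hneV hdisj haU
    have hgt : ∀ p ∈ B ∩ V, f a < f p := by
      rintro p ⟨⟨hpγ, hpf⟩, hpV⟩
      rcases lt_or_eq_of_le (show f a ≤ f p from hpf) with h | h
      · exact h
      · have hpa : p = a := hinj p hpγ a ha h.symm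
        subst hpa
        have : p ∈ B ∩ (U ∩ V) := ⟨⟨hpγ, hpf⟩, haU, hpV⟩
        rw [hdisj] at this
        exact absurd this (notMem_empty p)
    obtain ⟨b, hbBV⟩ := hneV
    have hres := hγ (U ∪ {p | f p < f a}) (V ∩ {p | f a < f p})
      (hU.union (isOpen_lt hf continuous_const))
      (hV.inter (isOpen_lt continuous_const hf))
      (by
        intro p hpγ
        rcases lt_or_ge (f p) (f a) with h | h
        · exact Or.inl (Or.inr h)
        · rcases hcov ⟨hpγ, h⟩ with h' | h'
          · exact Or.inl (Or.inl h')
          · exact Or.inr ⟨h', hgt p ⟨⟨hpγ, h⟩, h'⟩⟩)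
      ⟨a, ha, Or.inl haU⟩
      ⟨b, hbBV.1.1, hbBV.2, hgt b hbBV⟩
    obtain ⟨x, hxγ, hxU', hxV'⟩ := hres
    have hxB : x ∈ B := ⟨hxγ, show f a ≤ f x from le_of_lt hxV'.2⟩
    have hxU : x ∈ U := by
      rcases hxU' with h | h
      · exact h
      · exact absurd (show f a < f x from hxV'.2) (by simp only [mem_setOf_eq] at h; simp; linarith)
    exact absurd (show x ∈ B ∩ (U ∩ V) from ⟨hxB, hxU, hxV'.1⟩)
      (by rw [hdisj]; exact notMem_empty x)
  intro U V hU hV hcov hne1 hne2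
  by_contra hb
  rw [Set.not_nonempty_iff_eq_empty] at hb
  rcases hcov haB with haU | haV
  · exact key U V hU hV hcov hne2 hb haU
  · exact key V U hV hU (by rwa [union_comm]) hne1 (by rw [inter_comm V U]; exact hb) haV

private lemma mono_trunc_upper {S γ : Set (ℝ × ℝ)} (hγ : MonotonicPath S γ)
    {a : ℝ × ℝ} (ha : a ∈ γ) : MonotonicPath S (γ ∩ {p | a ≤ p}) := by
  obtain ⟨hsub, ⟨hne, hconn⟩, hchain⟩ := hγ
  have hinj : ∀ p ∈ γ, ∀ q ∈ γ, p.1 + p.2 = q.1 + q.2 → p = q := by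
    intro p hp q hq hf
    rcases chain_le_total hchain hp hq with h | h
    · exact sum_eq_imp h hf
    · exact (sum_eq_imp h hf.symm).symm
  have hset : γ ∩ {p | a ≤ p} = γ ∩ {p | a.1 + a.2 ≤ p.1 + p.2} := by
    ext p
    constructor
    · rintro ⟨hpγ, hple⟩
      obtain ⟨hx, hy⟩ := Prod.le_def.1 hple
      exact ⟨hpγ, by simp only [mem_setOf_eq]; linarith⟩
    · rintro ⟨hpγ, hps⟩
      refine ⟨hpγ, ?_⟩
      simp only [mem_setOf_eq] at hps ⊢
      rcases chain_le_total hchain ha hpγ with h | h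
      · exact h
      · obtain ⟨hx, hy⟩ := Prod.le_def.1 h
        have heq : p.1 + p.2 = a.1 + a.2 := by linarith
        have := hinj p hpγ a ha heq
        rw [this]
  refine ⟨(Set.inter_subset_left).trans hsub, ⟨⟨a, ha, le_refl a⟩, ?_⟩,
    fun p hp q hq => hchain p hp.1 q hq.1⟩
  rw [hset]
  exact preconn_trunc γ hconn (fun p => p.1 + p.2)
    (continuous_fst.add continuous_snd) hinj a ha

private lemma mono_trunc_lower {S γ : Set (ℝ × ℝ)} (hγ : MonotonicPath S γ)
    {a : ℝ × ℝ} (ha : a ∈ γ) : MonotonicPath S (γ ∩ {p | p ≤ a}) := by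
  obtain ⟨hsub, ⟨hne, hconn⟩, hchain⟩ := hγ
  have hinj : ∀ p ∈ γ, ∀ q ∈ γ, -(p.1 + p.2) = -(q.1 + q.2) → p = q := by
    intro p hp q hq hf
    have hf' : p.1 + p.2 = q.1 + q.2 := by linarith
    rcases chain_le_total hchain hp hq with h | h
    · exact sum_eq_imp h hf'
    · exact (sum_eq_imp h hf'.symm).symm
  have hset : γ ∩ {p | p ≤ a} = γ ∩ {p | -(a.1 + a.2) ≤ -(p.1 + p.2)} := by
    ext p
    constructor
    · rintro ⟨hpγ, hple⟩
      obtain ⟨hx, hy⟩ := Prod.le_def.1 hple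
      exact ⟨hpγ, by simp only [mem_setOf_eq]; linarith⟩
    · rintro ⟨hpγ, hps⟩
      refine ⟨hpγ, ?_⟩
      simp only [mem_setOf_eq, neg_le_neg_iff] at hps
      simp only [mem_setOf_eq]
      rcases chain_le_total hchain hpγ ha with h | h
      · exact h
      · obtain ⟨hx, hy⟩ := Prod.le_def.1 h
        have heq : p.1 + p.2 = a.1 + a.2 := by linarith
        exact le_of_eq (hinj p hpγ a ha (by linarith))
  refine ⟨(Set.inter_subset_left).trans hsub, ⟨⟨a, ha, le_refl a⟩, ?_⟩,
    fun p hp q hq => hchain p hp.1 q hq.1⟩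
  rw [hset]
  exact preconn_trunc γ hconn (fun p => -(p.1 + p.2))
    ((continuous_fst.add continuous_snd).neg) hinj a ha

/-- Monotonicity of `r↑`: moving right and down can only increase the rightmost
top point reachable. -/
theorem rUp_monotone (m n : ℝ) (hm : 0 ≤ m) (hn : 0 ≤ n)
    (Dε : Set (ℝ × ℝ)) (hD : Dε ⊆ Icc ((0 : ℝ), (0 : ℝ)) (2 * m, n))
    (rUp : ℝ × ℝ → ℝ)
    (hspec : ∀ p : ℝ × ℝ, (∃ u : ℝ, MutuallyReachable Dε p (u, n)) →
      MutuallyReachable Dε p (rUp p, n) ∧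
        ∀ u : ℝ, MutuallyReachable Dε p (u, n) → u ≤ rUp p)
    (hcross : ∀ γ₁ γ₂ : Set (ℝ × ℝ), MonotonicPath Dε γ₁ → MonotonicPath Dε γ₂ →
      ∀ p₁ ∈ γ₁, ∀ p₂ ∈ γ₂, ∀ x₁ x₂ : ℝ, (x₁, n) ∈ γ₁ → (x₂, n) ∈ γ₂ →
        p₁.1 ≤ p₂.1 → p₂.2 ≤ p₁.2 → x₂ ≤ x₁ → (γ₁ ∩ γ₂).Nonempty)
    (u₁ v₁ u₂ v₂ : ℝ)
    (h1 : ∃ u : ℝ, MutuallyReachable Dε (u₁, v₁) (u, n))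
    (h2 : ∃ u : ℝ, MutuallyReachable Dε (u₂, v₂) (u, n))
    (hu : u₁ ≤ u₂) (hv : v₂ ≤ v₁) :
    rUp (u₁, v₁) ≤ rUp (u₂, v₂) := by
  obtain ⟨hmr1, hmax1⟩ := hspec (u₁, v₁) h1
  obtain ⟨hmr2, hmax2⟩ := hspec (u₂, v₂) h2
  by_contra hlt
  push_neg at hlt
  set r₁ := rUp (u₁, v₁) with hr₁
  set r₂ := rUp (u₂, v₂) with hr₂
  obtain ⟨γ₁, hγ₁, hp₁, ht₁⟩ := hmr1
  obtain ⟨γ₂, hγ₂, hp₂, ht₂⟩ := hmr2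
  have hbox : ∀ p ∈ Dε, p.2 ≤ n := by
    intro p hp
    have hmem := hD hp
    rw [mem_Icc] at hmem
    exact (Prod.le_def.1 hmem.2).2
  -- base point is below top point on each path
  have hbt1 : (u₁, v₁) ≤ ((r₁ : ℝ), n) := by
    rcases chain_le_total hγ₁.2.2 hp₁ ht₁ with h | h
    · exact h
    · obtain ⟨ha, hb⟩ := Prod.le_def.1 h
      have hvn : v₁ ≤ n := hbox _ (hγ₁.1 hp₁)
      have hveq : v₁ = n := le_antisymm hvn hb
      have hre : MutuallyReachable Dε (u₁, v₁) (u₁, n) :=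
        ⟨γ₁, hγ₁, hp₁, by rw [← hveq]; exact hp₁⟩
      exact Prod.le_def.2 ⟨hmax1 u₁ hre, le_of_eq hveq⟩
  have hbt2 : (u₂, v₂) ≤ ((r₂ : ℝ), n) := by
    rcases chain_le_total hγ₂.2.2 hp₂ ht₂ with h | h
    · exact h
    · obtain ⟨ha, hb⟩ := Prod.le_def.1 h
      have hvn : v₂ ≤ n := hbox _ (hγ₂.1 hp₂)
      have hveq : v₂ = n := le_antisymm hvn hb
      have hre : MutuallyReachable Dε (u₂, v₂) (u₂, n) :=
        ⟨γ₂, hγ₂, hp₂, by rw [← hveq]; exact hp₂⟩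
      exact Prod.le_def.2 ⟨hmax2 u₂ hre, le_of_eq hveq⟩
  -- truncate each path above its base point
  have hγ₁' := mono_trunc_upper hγ₁ hp₁
  have hγ₂' := mono_trunc_upper hγ₂ hp₂
  have hp₁' : (u₁, v₁) ∈ γ₁ ∩ {p | (u₁, v₁) ≤ p} := ⟨hp₁, show (u₁, v₁) ≤ (u₁, v₁) from le_rfl⟩
  have hp₂' : (u₂, v₂) ∈ γ₂ ∩ {p | (u₂, v₂) ≤ p} := ⟨hp₂, show (u₂, v₂) ≤ (u₂, v₂) from le_rfl⟩
  have ht₁' : ((r₁ : ℝ), n) ∈ γ₁ ∩ {p | (u₁, v₁) ≤ p} := ⟨ht₁, hbt1⟩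
  have ht₂' : ((r₂ : ℝ), n) ∈ γ₂ ∩ {p | (u₂, v₂) ≤ p} := ⟨ht₂, hbt2⟩
  obtain ⟨q, hq₁, hq₂⟩ := hcross _ _ hγ₁' hγ₂' (u₁, v₁) hp₁' (u₂, v₂) hp₂'
    r₁ r₂ ht₁' ht₂' hu hv (le_of_lt hlt)
  -- the crossing point lies below (r₁, n)
  have hqle : q ≤ ((r₁ : ℝ), n) := by
    rcases chain_le_total hγ₁.2.2 hq₁.1 ht₁ with h | h
    · exact h
    · obtain ⟨ha, hb⟩ := Prod.le_def.1 h
      have hq2n : q.2 = n := le_antisymm (hbox _ (hγ₁.1 hq₁.1)) hb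
      have hqpair : (q.1, n) ∈ γ₂ := by rw [← hq2n]; exact hq₂.1
      have := hmax2 q.1 ⟨γ₂, hγ₂, hp₂, hqpair⟩
      exfalso; linarith
  -- splice: lower part of γ₂' up to q, then upper part of γ₁' from q
  have hA := mono_trunc_lower hγ₂' hq₂
  have hB := mono_trunc_upper hγ₁' hq₁
  have hmemA : (u₂, v₂) ∈ (γ₂ ∩ {p | (u₂, v₂) ≤ p}) ∩ {p | p ≤ q} := ⟨hp₂', hq₂.2⟩
  have hmemB : ((r₁ : ℝ), n) ∈ (γ₁ ∩ {p | (u₁, v₁) ≤ p}) ∩ {p | q ≤ p} := ⟨ht₁', hqle⟩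
  have hqA : q ∈ (γ₂ ∩ {p | (u₂, v₂) ≤ p}) ∩ {p | p ≤ q} := ⟨hq₂, show q ≤ q from le_rfl⟩
  have hqB : q ∈ (γ₁ ∩ {p | (u₁, v₁) ≤ p}) ∩ {p | q ≤ p} := ⟨hq₁, show q ≤ q from le_rfl⟩
  have hunion : MonotonicPath Dε
      (((γ₂ ∩ {p | (u₂, v₂) ≤ p}) ∩ {p | p ≤ q}) ∪
        ((γ₁ ∩ {p | (u₁, v₁) ≤ p}) ∩ {p | q ≤ p})) := by
    refine ⟨union_subset hA.1 hB.1,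
      ⟨⟨q, Or.inl hqA⟩, IsPreconnected.union q hqA hqB hA.2.1.2 hB.2.1.2⟩, ?_⟩
    rintro p (hp | hp) q' (hq' | hq')
    · exact hγ₂.2.2 p hp.1.1 q' hq'.1.1
    · obtain ⟨hx, hy⟩ := Prod.le_def.1 (((hp.2 : p ≤ q).trans (hq'.2 : q ≤ q')) : p ≤ q')
      nlinarith [mul_nonneg (sub_nonneg.2 hx) (sub_nonneg.2 hy)]
    · obtain ⟨hx, hy⟩ := Prod.le_def.1 (((hq'.2 : q' ≤ q).trans (hp.2 : q ≤ p)) : q' ≤ p)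
      nlinarith [mul_nonneg (sub_nonneg.2 hx) (sub_nonneg.2 hy)]
    · exact hγ₁.2.2 p hp.1.1 q' hq'.1.1
  have hreach : MutuallyReachable Dε (u₂, v₂) ((r₁ : ℝ), n) :=
    ⟨_, hunion, Or.inl hmemA, Or.inr hmemB⟩
  have := hmax2 r₁ hreach
  linarith
end

section
/- (Deque-cut correctness, left cut.) Let Q be a finite list of triples (beg, val, end) of reals with beg ≤ end, sorted so that consecutive triples have non-decreasing, non-overlapping intervals [beg, end]. Cutting Q to the left of x (removing from the left all triples with end < x, then replacing the new leftmost triple (beg,val,end) with (x,val,end) if beg ≤ x < end) produces a list representing exactly the restriction to [x, ∞) of the piecewise function represented by Q, where a triple (beg,val,end) represents the function f(u) = val if val < end and f(u) = u if val = end, on domain [beg,end]. -/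
open Set

/-- The value represented by a triple `(beg, val, end)` at `u`: the constant
`val` if `val < end`, and the identity otherwise. -/
noncomputable def tripleFun (t : ℝ × ℝ × ℝ) (u : ℝ) : ℝ := if t.2.1 < t.2.2 then t.2.1 else u

/-- The graph of the piecewise partial function represented by a deque (list)
of triples. -/
def repSet (Q : List (ℝ × ℝ × ℝ)) : Set (ℝ × ℝ) :=
  {p : ℝ × ℝ | ∃ t ∈ Q, t.1 ≤ p.1 ∧ p.1 ≤ t.2.2 ∧ p.2 = tripleFun t p.1}

/-- Cutting a deque to the left of `x`: drop from the left all triples with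
`end < x`, then clip the new leftmost triple at `x` if it straddles `x`. -/
noncomputable def leftCut (x : ℝ) (Q : List (ℝ × ℝ × ℝ)) : List (ℝ × ℝ × ℝ) :=
  match Q.dropWhile (fun t => decide (t.2.2 < x)) with
  | [] => []
  | t :: rest => if t.1 ≤ x ∧ x < t.2.2 then (x, t.2.1, t.2.2) :: rest else t :: rest

lemma chain_beg_ge (t : ℝ × ℝ × ℝ) (rest : List (ℝ × ℝ × ℝ))
    (hwf : ∀ s ∈ rest, s.1 ≤ s.2.2)
    (h : List.Chain' (fun s t => s.2.2 ≤ t.1) (t :: rest)) :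
    ∀ s ∈ rest, t.2.2 ≤ s.1 := by
  induction rest generalizing t with
  | nil => simp
  | cons a l ih =>
    intro s hs
    rcases List.isChain_cons_cons.mp h with ⟨h1, h2⟩
    rcases List.mem_cons.mp hs with rfl | hs
    · exact h1
    · exact le_trans (le_trans h1 (hwf a (by simp)))
        (ih a (fun s hs => hwf s (by simp [hs])) h2 s hs)

/-- Correctness of the left cut: for a well-formed sorted deque none of whose
right endpoints equals `x`, the cut deque represents exactly the restriction of
the represented function to `[x, ∞)`. -/
theorem leftCut_correct (x : ℝ) (Q : List (ℝ × ℝ × ℝ))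
    (hwf : ∀ t ∈ Q, t.1 ≤ t.2.2)
    (hsorted : Q.Chain' (fun s t => s.2.2 ≤ t.1))
    (hx : ∀ t ∈ Q, t.2.2 ≠ x) :
    repSet (leftCut x Q) = repSet Q ∩ {p : ℝ × ℝ | x ≤ p.1} := by
  induction Q with
  | nil => ext p; simp [leftCut, repSet]
  | cons t rest ih =>
    by_cases hlt : t.2.2 < x
    · have hQ : leftCut x (t :: rest) = leftCut x rest := by
        simp [leftCut, List.dropWhile_cons, hlt]
      rw [hQ, ih (fun s hs => hwf s (by simp [hs])) hsorted.tail
        (fun s hs => hx s (by simp [hs]))]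
      ext p
      simp only [repSet, Set.mem_inter_iff, Set.mem_setOf_eq, List.mem_cons]
      constructor
      · rintro ⟨⟨s, hs, h1, h2, h3⟩, hxp⟩
        exact ⟨⟨s, Or.inr hs, h1, h2, h3⟩, hxp⟩
      · rintro ⟨⟨s, hs, h1, h2, h3⟩, hxp⟩
        rcases hs with rfl | hs
        · linarith
        · exact ⟨⟨s, hs, h1, h2, h3⟩, hxp⟩
    · have hxlt : x < t.2.2 := lt_of_le_of_ne (not_lt.mp hlt) (Ne.symm (hx t (by simp)))
      have hall : ∀ s ∈ rest, t.2.2 ≤ s.1 :=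
        chain_beg_ge t rest (fun s hs => hwf s (by simp [hs])) hsorted
      have hd : (t :: rest).dropWhile (fun s => decide (s.2.2 < x)) = t :: rest := by
        simp [List.dropWhile_cons, hlt]
      by_cases hbx : t.1 ≤ x
      · have hQ : leftCut x (t :: rest) = (x, t.2.1, t.2.2) :: rest := by
          simp [leftCut, hd, hbx, hxlt]
        rw [hQ]
        ext p
        simp only [repSet, Set.mem_inter_iff, Set.mem_setOf_eq, List.mem_cons, tripleFun]
        constructor
        · rintro ⟨s, hs, h1, h2, h3⟩
          rcases hs with rfl | hs
          · exact ⟨⟨t, Or.inl rfl, by linarith, by simpa using h2, by simpa using h3⟩,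
              by simpa using h1⟩
          · exact ⟨⟨s, Or.inr hs, h1, h2, h3⟩, le_trans hxlt.le (le_trans (hall s hs) h1)⟩
        · rintro ⟨⟨s, hs, h1, h2, h3⟩, hxp⟩
          rcases hs with rfl | hs
          · exact ⟨(x, s.2.1, s.2.2), Or.inl rfl, hxp, h2, h3⟩
          · exact ⟨s, Or.inr hs, h1, h2, h3⟩
      · have hQ : leftCut x (t :: rest) = t :: rest := by
          simp [leftCut, hd, hbx]
        rw [hQ]
        ext p
        simp only [repSet, Set.mem_inter_iff, Set.mem_setOf_eq, List.mem_cons]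
        constructor
        · rintro ⟨s, hs, h1, h2, h3⟩
          refine ⟨⟨s, hs, h1, h2, h3⟩, ?_⟩
          rcases hs with rfl | hs
          · linarith
          · have := hall s hs; linarith
        · rintro ⟨⟨s, hs, h1, h2, h3⟩, hxp⟩
          exact ⟨s, hs, h1, h2, h3⟩
end
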